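/- Let n ≥ 2, let U ⊆ ℝⁿ be an open set, let f : U → ℝ be three times continuously differentiable, let S : U → M_n(ℝ) be a continuously differentiable matrix-valued map, and let R ∈ ℝ. Suppose that for every x ∈ U one has tr(S(x)) = R and the flat Miao–Tam equation −(Δf(x))·I + Hess f(x) − f(x)·S(x) = I, where Hess f(x) is the matrix with entries (∂_i∂_j f)(x), Δf(x) = tr(Hess f(x)), and I is the identity matrix. Then for every x ∈ U and all indices i, j, k one has f(x)·(∂_i S_{jk}(x) − ∂_j S_{ik}(x)) = (R/(n−1))·(∂_i f(x)·δ_{jk} − ∂_j f(x)·δ_{ik}) − (∂_i f(x)·S_{jk}(x) − ∂_j f(x)·S_{ik}(x)), where δ is the Kronecker delta. -/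

import Mathlib

attribute [local instance] Matrix.normedAddCommGroup Matrix.normedSpace

/-- Partial derivative in the `i`-th coordinate direction of a real-valued
function on `ℝⁿ` (modeled as `Fin n → ℝ`). -/
noncomputable def pd {n : ℕ} (i : Fin n) (g : (Fin n → ℝ) → ℝ)
    (x : Fin n → ℝ) : ℝ :=
  fderiv ℝ g x (Pi.single i 1)

/-- The Hessian matrix of `f : ℝⁿ → ℝ` at `x`, with entries `∂_i ∂_j f (x)`. -/
noncomputable def hess {n : ℕ} (f : (Fin n → ℝ) → ℝ) (x : Fin n → ℝ) :
    Matrix (Fin n) (Fin n) ℝ :=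
  Matrix.of fun i j => pd i (fun y => pd j f y) x

private lemma pd_congr {n : ℕ} (i : Fin n) {g h : (Fin n → ℝ) → ℝ} {x : Fin n → ℝ}
    (hgh : g =ᶠ[nhds x] h) : pd i g x = pd i h x := by
  unfold pd
  rw [hgh.fderiv_eq]

private lemma pd_mul {n : ℕ} (i : Fin n) {a b : (Fin n → ℝ) → ℝ} {x : Fin n → ℝ}
    (ha : DifferentiableAt ℝ a x) (hb : DifferentiableAt ℝ b x) :
    pd i (fun y => a y * b y) x = pd i a x * b x + a x * pd i b x := by
  unfold pd
  rw [fderiv_fun_mul ha hb]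
  simp only [ContinuousLinearMap.add_apply, ContinuousLinearMap.smul_apply,
    smul_eq_mul]
  ring

private lemma pd_affine {n : ℕ} (i : Fin n) (c C : ℝ) {a b : (Fin n → ℝ) → ℝ}
    {x : Fin n → ℝ} (ha : DifferentiableAt ℝ a x) (hb : DifferentiableAt ℝ b x) :
    pd i (fun y => c * a y + b y + C) x = c * pd i a x + pd i b x := by
  unfold pd
  rw [HasFDerivAt.fderiv (f := fun y => c * a y + b y + C)
    (((ha.hasFDerivAt.const_mul c).add hb.hasFDerivAt).add_const C)]
  simp

/-- Euclidean (flat) instance of Lemma 2.1 of the paper: if `f : U → ℝ` is `C³`,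
`S : U → Mₙ(ℝ)` is `C¹` with constant trace `R`, and the flat Miao–Tam equation
`-(Δf)·I + Hess f - f·S = I` holds on the open set `U`, then
`f(∂_i S_{jk} - ∂_j S_{ik}) = (R/(n-1))(∂_i f δ_{jk} - ∂_j f δ_{ik})
  - (∂_i f S_{jk} - ∂_j f S_{ik})` on `U`. -/
theorem flat_miao_tam_cotton_identity (n : ℕ) (hn : 2 ≤ n)
    (U : Set (Fin n → ℝ)) (hU : IsOpen U)
    (f : (Fin n → ℝ) → ℝ) (hf : ContDiffOn ℝ 3 f U)
    (S : (Fin n → ℝ) → Matrix (Fin n) (Fin n) ℝ) (hS : ContDiffOn ℝ 1 S U)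
    (R : ℝ) (htr : ∀ x ∈ U, Matrix.trace (S x) = R)
    (heq : ∀ x ∈ U,
      (-(Matrix.trace (hess f x))) • (1 : Matrix (Fin n) (Fin n) ℝ) +
          hess f x - f x • S x = 1) :
    ∀ x ∈ U, ∀ i j k : Fin n,
      f x * (pd i (fun y => S y j k) x - pd j (fun y => S y i k) x) =
        (R / ((n : ℝ) - 1)) *
            (pd i f x * (if j = k then (1 : ℝ) else 0) -
              pd j f x * (if i = k then (1 : ℝ) else 0)) -
          (pd i f x * S x j k - pd j f x * S x i k) := by
  intro x hx i j k
  have hnhds : U ∈ nhds x := hU.mem_nhds hx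
  have hn2 : (2:ℝ) ≤ (n:ℝ) := by exact_mod_cast hn
  have hne : ((n:ℝ) - 1) ≠ 0 := by linarith
  -- basic differentiability facts
  have hdf : DifferentiableAt ℝ f x :=
    (hf.contDiffAt hnhds).differentiableAt (by norm_num)
  have hF1 : ContDiffOn ℝ 2 (fderiv ℝ f) U := hf.fderiv_of_isOpen hU (by norm_num)
  have hpd : ∀ m : Fin n, ContDiffOn ℝ 2 (fun y => pd m f y) U := fun m =>
    hF1.clm_apply contDiffOn_const
  have hpd2 : ∀ m : Fin n,
      ContDiffOn ℝ 1 (fderiv ℝ (fun y => pd m f y)) U := fun m =>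
    (hpd m).fderiv_of_isOpen hU (by norm_num)
  have hH : ∀ l m : Fin n,
      ContDiffOn ℝ 1 (fun y => pd l (fun z => pd m f z) y) U := fun l m =>
    (hpd2 m).clm_apply contDiffOn_const
  have hdH : ∀ l m : Fin n,
      DifferentiableAt ℝ (fun y => pd l (fun z => pd m f z) y) x := fun l m =>
    ((hH l m).contDiffAt hnhds).differentiableAt one_ne_zero
  have hdS : ∀ j k : Fin n, DifferentiableAt ℝ (fun y => S y j k) x := by
    intro j k
    have h := ((hS.contDiffAt hnhds).differentiableAt one_ne_zero)
    exact (differentiableAt_pi.1 (differentiableAt_pi.1 h j) k)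
  -- the key pointwise identity obtained by differentiating the fundamental equation
  have key : ∀ i j k : Fin n,
      pd i f x * S x j k + f x * pd i (fun y => S y j k) x =
        (R / ((n:ℝ) - 1) * (if j = k then (1:ℝ) else 0)) * pd i f x +
          pd i (fun y => pd j (fun z => pd k f z) y) x := by
    intro i j k
    set δ : ℝ := if j = k then (1:ℝ) else 0 with hδ
    have E : (fun y => f y * S y j k) =ᶠ[nhds x]
        (fun y => (R / ((n:ℝ) - 1) * δ) * f y +
          pd j (fun z => pd k f z) y + ((n:ℝ) / ((n:ℝ) - 1) - 1) * δ) := by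
      filter_upwards [hnhds] with y hy
      have h1 : ((-(Matrix.trace (hess f y))) • (1 : Matrix (Fin n) (Fin n) ℝ) +
          hess f y - f y • S y) j k = (1 : Matrix (Fin n) (Fin n) ℝ) j k := by
        rw [heq y hy]
      have h2 := congrArg Matrix.trace (heq y hy)
      simp only [Matrix.trace_sub, Matrix.trace_add, Matrix.trace_smul,
        Matrix.trace_one, htr y hy, smul_eq_mul, Finset.card_univ,
        Fintype.card_fin] at h2
      simp only [Matrix.sub_apply, Matrix.add_apply, Matrix.smul_apply,
        Matrix.one_apply, smul_eq_mul] at h1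
      have hhe : hess f y j k = pd j (fun z => pd k f z) y := rfl
      rw [hhe] at h1
      set T := Matrix.trace (hess f y) with hT
      set H := pd j (fun z => pd k f z) y with hHdef
      by_cases hjk : j = k
      · subst hjk
        rw [if_pos rfl] at h1
        have hfs : f y * S y j j = -T + H - 1 := by linarith
        simp only [hδ, if_pos rfl, mul_one]
        rw [hfs]
        field_simp
        ring_nf
        ring_nf at h2
        simp only [if_true, mul_one]
        linarith
      · simp only [hjk, if_false] at h1 ⊢
        simp only [hδ, hjk, if_false, mul_zero, zero_mul, add_zero, zero_add]
        linarith
    have := pd_congr i E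
    rw [pd_mul i hdf (hdS j k)] at this
    rw [pd_affine i _ _ hdf (hdH j k)] at this
    linarith [this]
  -- symmetry of third derivatives in the first two indices
  have hsym : pd i (fun y => pd j (fun z => pd k f z) y) x =
      pd j (fun y => pd i (fun z => pd k f z) y) x := by
    have hFk : ContDiffAt ℝ 2 (fun y => pd k f y) x := (hpd k).contDiffAt hnhds
    have hsymm := hFk.isSymmSndFDerivAt (by simp)
    have hdF : DifferentiableAt ℝ (fderiv ℝ (fun y => pd k f y)) x :=
      ((hpd2 k).contDiffAt hnhds).differentiableAt one_ne_zero
    have hev : ∀ l m : Fin n,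
        pd l (fun y => pd m (fun z => pd k f z) y) x =
          fderiv ℝ (fderiv ℝ (fun y => pd k f y)) x (Pi.single l 1)
            (Pi.single m 1) := by
      intro l m
      show (fderiv ℝ (fun y => (fderiv ℝ (fun y => pd k f y) y) (Pi.single m 1)) x)
          (Pi.single l 1) = _
      rw [fderiv_clm_apply hdF (differentiableAt_const _)]
      simp
    rw [hev i j, hev j i, hsymm]
  linear_combination key i j k - key j i k + hsym
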